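/- Consider a Czech hat game on the star with center v and leaves ℓ_1, …, ℓ_n (the center and each leaf see each other; there are no other arcs), with 0 < g w < h w for every vertex w. The game is winnable if and only if there exist sets Z k i ⊆ Fin (h ℓ_i), for k ∈ Fin (h v) and i ∈ Fin n, with |Z k i| = h ℓ_i − g ℓ_i for all k and i, such that for every subset T ⊆ Fin (h v) of cardinality g v + 1, the intersection over k ∈ T of the prisms {q : ∀ i, Fin (h ℓ_i) | ∀ i, q i ∈ Z k i} is empty. -/

import Mathlib

/-- A Czech hat game on the digraph with adjacency `D` (sage `v` sees sage `u`
iff `D v u`), guessness `g`, and hatness `h`, is winnable: there is a strategy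
assigning to each sage `v` a set of `g v` guesses, depending only on the hats
she sees, such that for every coloring some sage guesses her own hat color. -/
def HatGame.Winnable {V : Type*} (D : V → V → Prop) (g h : V → ℕ) : Prop :=
  ∃ F : ∀ v : V, (∀ u : V, Fin (h u)) → Finset (Fin (h v)),
    (∀ (v : V) (c c' : ∀ u : V, Fin (h u)),
        (∀ u : V, D v u → c u = c' u) → F v c = F v c') ∧
    (∀ (v : V) (c : ∀ u : V, Fin (h u)), (F v c).card = g v) ∧
    (∀ c : ∀ u : V, Fin (h u), ∃ v : V, c v ∈ F v c)

/-- A Czech game on a star (center `none`, leaves `some i`) is winnable iff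
one can fit `h v` combinatorial prisms of measurements `h ℓᵢ - g ℓᵢ` into the
box `∀ i, Fin (h ℓᵢ)` so that any `g v + 1` of them have empty intersection. -/
theorem czech_star_winnable_iff (n : ℕ) (hv gv : ℕ) (hl gl : Fin n → ℕ)
    (hgv : 0 < gv) (hvv : gv < hv)
    (hgl : ∀ i, 0 < gl i) (hhl : ∀ i, gl i < hl i) :
    HatGame.Winnable
      (fun a b : Option (Fin n) =>
        match a, b with
        | none, some _ => True
        | some _, none => True
        | _, _ => False)
      (fun a => a.elim gv gl)
      (fun a => a.elim hv hl) ↔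
    ∃ Z : Fin hv → ∀ i : Fin n, Finset (Fin (hl i)),
      (∀ k i, (Z k i).card = hl i - gl i) ∧
      ∀ T : Finset (Fin hv), T.card = gv + 1 →
        ¬ ∃ q : ∀ i : Fin n, Fin (hl i), ∀ k ∈ T, ∀ i, q i ∈ Z k i := by
  classical
  constructor
  · rintro ⟨F, hsee, hcard, hwin⟩
    set col : Fin hv → (∀ i : Fin n, Fin (hl i)) →
        (∀ u : Option (Fin n), Fin ((fun a => Option.elim a hv hl) u)) :=
      fun k q u => match u with | none => k | some i => q i with hcol
    have q0 : ∀ i : Fin n, Fin (hl i) := fun i => ⟨0, (hgl i).trans (hhl i)⟩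
    -- leaf strategy depends only on center color
    have hleaf : ∀ (i : Fin n) (k : Fin hv) (q q' : ∀ i : Fin n, Fin (hl i)),
        F (some i) (col k q) = F (some i) (col k q') := by
      intro i k q q'
      apply hsee
      intro u hu
      cases u with
      | none => rfl
      | some j => exact absurd hu (by simp)
    -- center strategy depends only on leaf colors
    have hcenter : ∀ (k k' : Fin hv) (q : ∀ i : Fin n, Fin (hl i)),
        F none (col k q) = F none (col k' q) := by
      intro k k' q
      apply hsee
      intro u hu
      cases u with
      | none => exact absurd hu (by simp)
      | some j => rfl
    refine ⟨fun k i => (F (some i) (col k q0))ᶜ, ?_, ?_⟩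
    · intro k i
      have := hcard (some i) (col k q0)
      have h := Finset.card_compl (F (some i) (col k q0))
      rw [Fintype.card_fin, this] at h
      exact h
    · rintro T hT ⟨q, hq⟩
      set k0 : Fin hv := ⟨0, hgv.trans hvv⟩
      have hTsub : T ⊆ F none (col k0 q) := by
        intro k hk
        obtain ⟨v, hvmem⟩ := hwin (col k q)
        cases v with
        | none =>
          have : F none (col k q) = F none (col k0 q) := hcenter k k0 q
          rw [← this]
          exact hvmem
        | some i =>
          exfalso
          have h1 : q i ∈ F (some i) (col k q0) := by
            rw [← hleaf i k q q0]; exact hvmem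
          have h2 := hq k hk i
          simp only [Finset.mem_compl] at h2
          exact (Finset.mem_compl.mp h2) h1
      have := Finset.card_le_card hTsub
      rw [hT] at this
      have h3 : (F none (col k0 q)).card = gv := hcard none (col k0 q)
      have h4 : gv + 1 ≤ gv := this.trans h3.le
      omega
  · rintro ⟨Z, hZcard, hZ⟩
    -- the "bad set" of center colors for a given coloring
    set B : (∀ u : Option (Fin n), Fin ((fun a => Option.elim a hv hl) u)) →
        Finset (Fin hv) :=
      fun c => Finset.univ.filter (fun k => ∀ i, c (some i) ∈ Z k i) with hB
    have hBle : ∀ c, (B c).card ≤ gv := by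
      intro c
      by_contra hlt
      push_neg at hlt
      obtain ⟨T, hTsub, hTcard⟩ := Finset.exists_subset_card_eq
        (show gv + 1 ≤ (B c).card from hlt)
      refine hZ T hTcard ⟨fun i => c (some i), ?_⟩
      intro k hk i
      have := hTsub hk
      simp only [hB, Finset.mem_filter] at this
      exact this.2 i
    obtain ⟨pick, hpick⟩ : ∃ pick : Finset (Fin hv) → Finset (Fin hv),
        ∀ S : Finset (Fin hv), S.card ≤ gv → S ⊆ pick S ∧ (pick S).card = gv := by
      have h : ∀ S : Finset (Fin hv), ∃ S', (S.card ≤ gv → S ⊆ S' ∧ S'.card = gv) := by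
        intro S
        by_cases hS : S.card ≤ gv
        · obtain ⟨S', hsub, hcard'⟩ := Finset.exists_superset_card_eq hS
            (by simp [Fintype.card_fin]; omega)
          exact ⟨S', fun _ => ⟨hsub, hcard'⟩⟩
        · exact ⟨∅, fun h' => absurd h' hS⟩
      choose pick hpick using h
      exact ⟨pick, hpick⟩
    refine ⟨fun v => match v with
      | none => fun c => pick (B c)
      | some i => fun c => (Z (c none) i)ᶜ, ?_, ?_, ?_⟩
    · intro v c c' hcc
      cases v with
      | none =>
        have hb : B c = B c' := by
          have hq : ∀ i : Fin n, c (some i) = c' (some i) := fun i => hcc (some i) trivial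
          simp only [hB]
          apply Finset.filter_congr
          intro k _
          simp only [hq]
        exact congrArg pick hb
      | some i =>
        have : c none = c' none := hcc none trivial
        simp only [this]
    · intro v c
      cases v with
      | none => exact (hpick (B c) (hBle c)).2
      | some i =>
        have := hZcard (c none) i
        have h := Finset.card_compl (Z (c none) i)
        rw [this, Fintype.card_fin] at h
        have := hhl i
        exact h.trans (by show _ = gl i; omega)
    · intro c
      by_cases hb : ∀ i : Fin n, c (some i) ∈ Z (c none) i
      · refine ⟨none, ?_⟩
        have hmem : c none ∈ B c := by
          simp only [hB, Finset.mem_filter, Finset.mem_univ, true_and]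
          exact Finset.mem_filter.mpr ⟨Finset.mem_univ _, hb⟩
        exact (hpick (B c) (hBle c)).1 hmem
      · push_neg at hb
        obtain ⟨i, hi⟩ := hb
        exact ⟨some i, Finset.mem_compl.mpr hi⟩
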